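/- In any permutation dinner of even size n = 2k played with both players using the crossout strategy, Alice never eats her least favourite morsel; more generally, for every j ≥ 0, Alice eats at most j of her 2j+1 least favourite morsels. -/

import Mathlib

open Finset

/-- One step of the crossout process: at Alice's steps remove the remaining morsel of
minimal first coordinate, at Bob's steps the one of minimal second coordinate. -/
noncomputable def coAux (turnA : Bool) (D : Finset (ℝ × ℝ)) : List (ℝ × ℝ) :=
  if h : D.Nonempty then
    (if turnA then (Finset.exists_min_image D Prod.fst h).choose
      else (Finset.exists_min_image D Prod.snd h).choose) ::
      coAux (!turnA)
        (D.erase (if turnA then (Finset.exists_min_image D Prod.fst h).choose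
          else (Finset.exists_min_image D Prod.snd h).choose))
  else []
termination_by D.card
decreasing_by
  apply Finset.card_erase_lt_of_mem
  split
  · exact (Finset.exists_min_image D Prod.fst h).choose_spec.1
  · exact (Finset.exists_min_image D Prod.snd h).choose_spec.1

/-- The crossout sequence of a dinner, as a list `[m₁, m₂, …, mₙ]`. -/
noncomputable def crossoutList (D : Finset (ℝ × ℝ)) : List (ℝ × ℝ) := coAux true D

/-- `crossout D i` is the `i`-th morsel `mᵢ` (1-indexed) of the crossout sequence of `D`. -/
noncomputable def crossout (D : Finset (ℝ × ℝ)) (i : ℕ) : ℝ × ℝ :=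
  (crossoutList D).getD (i - 1) (0, 0)

/-- Totally ordered preferences: distinct morsels have distinct first coordinates and
distinct second coordinates. -/
def TotallyOrderedPrefs (D : Finset (ℝ × ℝ)) : Prop :=
  (∀ p ∈ D, ∀ q ∈ D, p.1 = q.1 → p = q) ∧ (∀ p ∈ D, ∀ q ∈ D, p.2 = q.2 → p = q)

/-- Alice's crossout score: sum of first coordinates of the even-indexed crossout morsels. -/
noncomputable def chiA (D : Finset (ℝ × ℝ)) : ℝ :=
  ∑ i ∈ Finset.Icc 1 D.card, if Even i then (crossout D i).1 else 0

/-- Bob's crossout score: sum of second coordinates of the odd-indexed crossout morsels. -/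
noncomputable def chiB (D : Finset (ℝ × ℝ)) : ℝ :=
  ∑ i ∈ Finset.Icc 1 D.card, if Odd i then (crossout D i).2 else 0
open scoped Classical

lemma coAux_length_aux (N : ℕ) : ∀ (D : Finset (ℝ × ℝ)) (t : Bool), D.card ≤ N →
    (coAux t D).length = D.card := by
  induction N with
  | zero =>
    intro D t h
    have hD : D = ∅ := Finset.card_eq_zero.mp (Nat.le_zero.mp h)
    subst hD
    rw [coAux, dif_neg (by simp)]
    simp
  | succ N ih =>
    intro D t h
    by_cases hne : D.Nonempty
    · rw [coAux, dif_pos hne]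
      set p := (if t then (Finset.exists_min_image D Prod.fst hne).choose
          else (Finset.exists_min_image D Prod.snd hne).choose) with hp
      have hpD : p ∈ D := by
        rw [hp]; split
        · exact (Finset.exists_min_image D Prod.fst hne).choose_spec.1
        · exact (Finset.exists_min_image D Prod.snd hne).choose_spec.1
      have hcard : (D.erase p).card = D.card - 1 := Finset.card_erase_of_mem hpD
      have h1 : 1 ≤ D.card := Finset.card_pos.mpr hne
      rw [List.length_cons, ih (D.erase p) (!t) (by omega), hcard]
      omega
    · rw [coAux, dif_neg hne]
      simp [Finset.not_nonempty_iff_eq_empty.mp hne]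

lemma coAux_length (D : Finset (ℝ × ℝ)) (t : Bool) : (coAux t D).length = D.card :=
  coAux_length_aux D.card D t le_rfl

lemma coAux_key (c : ℝ) (N : ℕ) : ∀ (D : Finset (ℝ × ℝ)) (t : Bool), D.card ≤ N →
    (∑ m ∈ Finset.range (coAux t D).length,
      if ((if t then Odd m else Even m) ∧ ((coAux t D).getD m (0,0)).1 ≤ c) then 1 else 0)
    ≤ ((D.filter (fun p => p.1 ≤ c)).card + if t then 0 else 1) / 2 := by
  induction N with
  | zero =>
    intro D t h
    have hD : D = ∅ := Finset.card_eq_zero.mp (Nat.le_zero.mp h)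
    subst hD
    rw [coAux, dif_neg (by simp)]
    simp
  | succ N ih =>
    intro D t h
    by_cases hne : D.Nonempty
    · have key : ∀ (p : ℝ × ℝ), p ∈ D →
          (∑ m ∈ Finset.range (p :: coAux (!t) (D.erase p)).length,
            if ((if t then Odd m else Even m)
                ∧ ((p :: coAux (!t) (D.erase p)).getD m (0,0)).1 ≤ c) then 1 else 0)
          = (∑ m ∈ Finset.range (coAux (!t) (D.erase p)).length,
              if ((if !t then Odd m else Even m)
                  ∧ ((coAux (!t) (D.erase p)).getD m (0,0)).1 ≤ c) then 1 else 0)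
            + (if ((if t then Odd 0 else Even 0) ∧ p.1 ≤ c) then 1 else 0) := by
        intro p hpD
        rw [List.length_cons, Finset.sum_range_succ']
        congr 1
        refine Finset.sum_congr rfl fun m _ => ?_
        cases t <;>
          simp [Nat.odd_add_one, Nat.even_add_one, Nat.not_odd_iff_even, Nat.not_even_iff_odd,
            List.getD_cons_succ]
      have hsub : ∀ p : ℝ × ℝ, ((D.erase p).filter (fun q => q.1 ≤ c)).card
          ≤ (D.filter (fun q => q.1 ≤ c)).card :=
        fun p => Finset.card_le_card
          (Finset.filter_subset_filter _ (Finset.erase_subset _ _))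
      have herase : ∀ p ∈ D, p.1 ≤ c → ((D.erase p).filter (fun q => q.1 ≤ c)).card
          = (D.filter (fun q => q.1 ≤ c)).card - 1 ∧ 1 ≤ (D.filter (fun q => q.1 ≤ c)).card := by
        intro p hpD hpc
        have hpf : p ∈ D.filter (fun q => q.1 ≤ c) := Finset.mem_filter.mpr ⟨hpD, hpc⟩
        constructor
        · rw [Finset.filter_erase, Finset.card_erase_of_mem hpf]
        · exact Finset.card_pos.mpr ⟨p, hpf⟩
      have hcard : ∀ p ∈ D, (D.erase p).card ≤ N := by
        intro p hpD
        have := Finset.card_erase_of_mem hpD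
        have h1 : 1 ≤ D.card := Finset.card_pos.mpr hne
        omega
      cases t with
      | true =>
        have hmin := (Finset.exists_min_image D Prod.fst hne).choose_spec
        rw [coAux, dif_pos hne]
        have hkey := key _ hmin.1
        have hih := ih (D.erase (Finset.exists_min_image D Prod.fst hne).choose) false
          (hcard _ hmin.1)
        set p := (Finset.exists_min_image D Prod.fst hne).choose with hpdef
        simp only [Bool.not_true, Bool.not_false, eq_self_iff_true, Bool.false_eq_true,
          if_true, if_false, Nat.not_odd_zero, false_and, add_zero] at hkey hih ⊢
        rw [hkey]
        refine le_trans hih ?_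
        by_cases hpos : 1 ≤ (D.filter (fun q => q.1 ≤ c)).card
        · obtain ⟨x, hx⟩ := Finset.card_pos.mp hpos
          have hxD := Finset.mem_filter.mp hx
          have hpc : p.1 ≤ c := le_trans (hmin.2 x hxD.1) hxD.2
          have := herase p hmin.1 hpc
          omega
        · have := hsub p
          omega
      | false =>
        have hmin := (Finset.exists_min_image D Prod.snd hne).choose_spec
        rw [coAux, dif_pos hne]
        have hkey := key _ hmin.1
        have hih := ih (D.erase (Finset.exists_min_image D Prod.snd hne).choose) true
          (hcard _ hmin.1)
        set p := (Finset.exists_min_image D Prod.snd hne).choose with hpdef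
        simp only [Bool.not_true, Bool.not_false, eq_self_iff_true, Bool.false_eq_true,
          if_true, if_false, Even.zero, true_and, add_zero] at hkey hih ⊢
        rw [hkey]
        by_cases hpc : p.1 ≤ c
        · have := herase p hmin.1 hpc
          rw [if_pos hpc]
          omega
        · have := hsub p
          rw [if_neg hpc]
          omega
    · rw [coAux, dif_neg hne]
      simp

/-- In a permutation dinner of even size n = 2k, under mutual crossout play (Alice eats
the even-indexed crossout morsels) Alice never eats her least favourite morsel, and more
generally for every j she eats at most j of her 2j+1 least favourite morsels. -/
theorem alice_avoids_least_favourites (n k : ℕ) (hn : n = 2 * k) (b : ℕ → ℕ)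
    (hb : Set.BijOn b (Set.Icc 1 n) (Set.Icc 1 n)) (D : Finset (ℝ × ℝ))
    (hD : D = (Finset.Icc 1 n).image (fun i : ℕ => ((i : ℝ), (b i : ℝ)))) :
    (∀ i ∈ Finset.Icc 1 n, Even i → (crossout D i).1 ≠ 1) ∧
    ∀ j : ℕ,
      ((Finset.Icc 1 n).filter
        (fun i => Even i ∧ (crossout D i).1 ≤ (2 * j + 1 : ℝ))).card ≤ j := by
  have hcardD : D.card = n := by
    rw [hD, Finset.card_image_of_injOn, Nat.card_Icc]
    · omega
    · intro x _ y _ hxy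
      have : (x : ℝ) = y := congrArg Prod.fst hxy
      exact_mod_cast this
  have hlen : (coAux true D).length = n := by rw [coAux_length, hcardD]
  have h2 : ∀ j : ℕ, ((Finset.Icc 1 n).filter
      (fun i => Even i ∧ (crossout D i).1 ≤ (2 * j + 1 : ℝ))).card ≤ j := by
    intro j
    set c : ℝ := (2 * j + 1 : ℝ) with hc
    have ha : (D.filter (fun p => p.1 ≤ c)).card ≤ 2 * j + 1 := by
      have hsub : D.filter (fun p => p.1 ≤ c) ⊆
          (Finset.Icc 1 (2 * j + 1)).image (fun i : ℕ => ((i : ℝ), (b i : ℝ))) := by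
        intro q hq
        rw [Finset.mem_filter, hD, Finset.mem_image] at hq
        obtain ⟨⟨i, hi, rfl⟩, hqc⟩ := hq
        rw [Finset.mem_Icc] at hi
        refine Finset.mem_image.mpr ⟨i, Finset.mem_Icc.mpr ⟨hi.1, ?_⟩, rfl⟩
        have hico : (i : ℝ) ≤ ((2 * j + 1 : ℕ) : ℝ) := by
          push_cast
          simpa [hc] using hqc
        exact_mod_cast hico
      calc (D.filter (fun p => p.1 ≤ c)).card
          ≤ ((Finset.Icc 1 (2 * j + 1)).image (fun i : ℕ => ((i : ℝ), (b i : ℝ)))).card :=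
            Finset.card_le_card hsub
        _ ≤ (Finset.Icc 1 (2 * j + 1)).card := Finset.card_image_le
        _ = 2 * j + 1 := by rw [Nat.card_Icc]; omega
    have hS : ((Finset.range n).filter
        (fun m => Odd m ∧ ((coAux true D).getD m (0, 0)).1 ≤ c)).card ≤ j := by
      have hkey := coAux_key c D.card D true le_rfl
      simp only [eq_self_iff_true, if_true, add_zero] at hkey
      rw [Finset.card_filter, ← hlen]
      omega
    refine le_trans ?_ hS
    apply Finset.card_le_card_of_injOn (fun i => i - 1)
    · intro i hi
      rw [Finset.mem_coe, Finset.mem_filter, Finset.mem_Icc] at hi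
      obtain ⟨⟨hi1, hi2⟩, hev, hle⟩ := hi
      rw [Finset.mem_coe, Finset.mem_filter, Finset.mem_range]
      dsimp only
      rw [Nat.even_iff] at hev
      exact ⟨by omega, by rw [Nat.odd_iff]; omega, hle⟩
    · intro i hi i' hi' hii
      rw [Finset.coe_filter, Set.mem_setOf_eq, Finset.mem_Icc] at hi hi'
      simp only at hii
      omega
  refine ⟨?_, h2⟩
  intro i hi hev hcon
  have h0 := h2 0
  have hmem : i ∈ (Finset.Icc 1 n).filter
      (fun i => Even i ∧ (crossout D i).1 ≤ (2 * (0 : ℕ) + 1 : ℝ)) := by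
    refine Finset.mem_filter.mpr ⟨hi, hev, ?_⟩
    rw [hcon]
    norm_num
  have := Finset.card_pos.mpr ⟨i, hmem⟩
  omega
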